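/- Let $\alpha, y \in \mathbb{R}$, let $m \ge 1$ be a natural number, and let $r \in \mathbb{R}$ satisfy $r \ne 1$ and $y + \frac{1}{r-1} > 0$. Then $\frac{d^m}{dr^m}\Big[\Big(y + \frac{1}{r-1}\Big)^{\alpha}\Big] = \sum_{k=1}^{m} \binom{m-1}{k-1} \frac{m!}{k!}\, \frac{(-1)^m}{(r-1)^{m+k}}\, (\alpha)_k\, \Big(y + \frac{1}{r-1}\Big)^{\alpha - k}$, where real powers $w^s$ (for $w > 0$, $s \in \mathbb{R}$) denote $e^{s \ln w}$. -/

import Mathlib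

/-- The falling factorial `(α)_k = α (α-1) ⋯ (α-k+1)`. -/
noncomputable def fallingFactorial (a : ℝ) (m : ℕ) : ℝ :=
  ∏ i ∈ Finset.range m, (a - i)

open Finset

lemma fallingFactorial_succ (a : ℝ) (m : ℕ) :
    fallingFactorial a (m+1) = fallingFactorial a m * (a - m) := by
  simp [fallingFactorial, Finset.prod_range_succ]

lemma hasDerivAt_inner (y r : ℝ) (hr : r ≠ 1) :
    HasDerivAt (fun s => y + (s-1)⁻¹) (-((r-1)^2)⁻¹) r := by
  have h1 : HasDerivAt (fun s : ℝ => s - 1) 1 r := (hasDerivAt_id r).sub_const 1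
  have h2 := (h1.inv (sub_ne_zero.mpr hr)).const_add y
  refine h2.congr_deriv ?_
  ring

lemma hasDerivAt_term (y β : ℝ) (n : ℕ) (r : ℝ) (hr : r ≠ 1) (hyr : 0 < y + (r-1)⁻¹) :
    HasDerivAt (fun s => ((s-1)^n)⁻¹ * (y+(s-1)⁻¹)^β)
      (-(n:ℝ)/(r-1)^(n+1) * (y+(r-1)⁻¹)^β - β/(r-1)^(n+2) * (y+(r-1)⁻¹)^(β-1)) r := by
  have hne : r - 1 ≠ 0 := sub_ne_zero.mpr hr
  have h1 : HasDerivAt (fun s : ℝ => s - 1) 1 r := (hasDerivAt_id r).sub_const 1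
  have hp : HasDerivAt (fun s : ℝ => ((s-1)^(-(n:ℤ)))) ((Int.cast (-(n:ℤ)) : ℝ) * (r-1)^(-(n:ℤ)-1) * 1) r := by
    have := (hasDerivAt_zpow (-(n:ℤ)) (r-1) (Or.inl hne)).comp r h1
    exact this
  have hq : HasDerivAt (fun s => (y+(s-1)⁻¹)^β) ((-((r-1)^2)⁻¹) * β * (y+(r-1)⁻¹)^(β-1)) r :=
    (hasDerivAt_inner y r hr).rpow_const (Or.inl hyr.ne')
  have h := hp.fun_mul hq
  have hfun : (fun s : ℝ => ((s-1)^(-(n:ℤ))) * (y+(s-1)⁻¹)^β)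
      = fun s : ℝ => ((s-1)^n)⁻¹ * (y+(s-1)⁻¹)^β := by
    funext s
    rw [zpow_neg, zpow_natCast]
  rw [hfun] at h
  refine h.congr_deriv ?_
  have e1 : (r-1)^(-(n:ℤ)-1) = ((r-1)^(n+1))⁻¹ := by
    rw [show (-(n:ℤ)-1) = -((n+1:ℕ):ℤ) by push_cast; ring, zpow_neg, zpow_natCast]
  have e2 : (r-1)^(-(n:ℤ)) = ((r-1)^n)⁻¹ := by rw [zpow_neg, zpow_natCast]
  rw [e1, e2]
  have hpow : (r-1)^(n+2) = (r-1)^n * (r-1)^2 := by ring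
  push_cast
  field_simp
  ring

lemma choose_id (m i : ℕ) (hm : 1 ≤ m) :
    m.choose (i+1) * (m+1) = (m-1).choose (i+1) * (m+i+2) + (i+2) * (m-1).choose i := by
  obtain ⟨n, rfl⟩ : ∃ n, m = n + 1 := ⟨m-1, by omega⟩
  simp only [Nat.add_sub_cancel]
  rcases le_or_gt i n with h | h
  · rw [Nat.choose_succ_succ]
    have hc := Nat.choose_succ_right_eq n i
    zify [h] at hc ⊢
    linear_combination (-1 : ℤ) * hc
  · rw [Nat.choose_eq_zero_of_lt h, Nat.choose_eq_zero_of_lt (by omega : n < i+1),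
      Nat.choose_eq_zero_of_lt (by omega : n+1 < i+1)]
    ring

noncomputable def Tm (α y : ℝ) (m k : ℕ) (r : ℝ) : ℝ :=
  ((m - 1).choose (k - 1) : ℝ) * ((m.factorial : ℝ) / (k.factorial : ℝ)) *
    ((-1 : ℝ) ^ m / (r - 1) ^ (m + k)) * fallingFactorial α k * (y + (r - 1)⁻¹) ^ (α - k)

noncomputable def Am (α y : ℝ) (m : ℕ) (r : ℝ) (k : ℕ) : ℝ :=
  ((m - 1).choose (k - 1) : ℝ) * ((m.factorial : ℝ) / (k.factorial : ℝ)) * (-1 : ℝ)^m *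
    fallingFactorial α k * (-((m+k : ℕ) : ℝ)/(r-1)^(m+k+1)) * (y + (r - 1)⁻¹) ^ (α - k)

noncomputable def Bm (α y : ℝ) (m : ℕ) (r : ℝ) (k : ℕ) : ℝ :=
  ((m - 1).choose (k - 1) : ℝ) * ((m.factorial : ℝ) / (k.factorial : ℝ)) * (-1 : ℝ)^m *
    fallingFactorial α k * (-(α - k)/(r-1)^(m+k+2)) * (y + (r - 1)⁻¹) ^ (α - k - 1)

lemma sum_Icc_one (M : ℕ) (f : ℕ → ℝ) :
    ∑ k ∈ Finset.Icc 1 M, f k = ∑ i ∈ Finset.range M, f (i+1) := by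
  rw [← Finset.Ico_add_one_right_eq_Icc, Finset.sum_Ico_eq_sum_range]
  simp [add_comm]

lemma P1 (α y : ℝ) (m : ℕ) (r : ℝ) : Tm α y (m+1) 1 r = Am α y m r 1 := by
  simp only [Tm, Am, Nat.add_sub_cancel, Nat.factorial_succ, Nat.factorial_one, Nat.sub_self,
    Nat.choose_zero_right]
  push_cast
  ring

lemma P3 (α y : ℝ) (m : ℕ) (r : ℝ) (hm : 1 ≤ m) : Am α y m r (m+1) = 0 := by
  simp [Am, Nat.add_sub_cancel, Nat.choose_eq_zero_of_lt (show m-1 < m by omega)]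

lemma P2 (α y : ℝ) (m : ℕ) (r : ℝ) (hm : 1 ≤ m) (hne : r - 1 ≠ 0) (i : ℕ) :
    Tm α y (m+1) (i+2) r = Am α y m r (i+2) + Bm α y m r (i+1) := by
  have hcR : (m.choose (i+1) : ℝ) * ((m:ℝ)+1)
      = ((m-1).choose (i+1) : ℝ) * ((m:ℝ)+(i:ℝ)+2) + ((i:ℝ)+2) * ((m-1).choose i : ℝ) := by
    exact_mod_cast choose_id m i hm
  have hf : fallingFactorial α (i+2) = fallingFactorial α (i+1) * (α - ((i+1:ℕ):ℝ)) := by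
    exact_mod_cast fallingFactorial_succ α (i+1)
  have hexp : α - ((i+1:ℕ):ℝ) - 1 = α - ((i+2:ℕ):ℝ) := by push_cast; ring
  have hfacm : (((m+1).factorial : ℕ) : ℝ) = ((m:ℝ)+1) * (m.factorial : ℝ) := by
    rw [Nat.factorial_succ]; push_cast; ring
  have hfac2 : (((i+2).factorial : ℕ) : ℝ) = ((i:ℝ)+2) * ((i+1).factorial : ℝ) := by
    rw [Nat.factorial_succ (i+1)]; push_cast; ring
  have hidx1 : i + 2 - 1 = i + 1 := by omega
  have hidx2 : i + 1 - 1 = i := by omega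
  have hi2 : ((i:ℝ)+2) ≠ 0 := by positivity
  have hfac1 : (((i+1).factorial : ℕ) : ℝ) ≠ 0 := Nat.cast_ne_zero.mpr (Nat.factorial_ne_zero _)
  have hmfac : ((m.factorial : ℕ) : ℝ) ≠ 0 := Nat.cast_ne_zero.mpr (Nat.factorial_ne_zero _)
  set K : ℝ := (m.factorial : ℝ) / (((i:ℝ)+2) * (((i+1).factorial : ℕ) : ℝ)) * (-1:ℝ)^m *
      fallingFactorial α (i+1) * (α - ((i:ℝ)+1)) * (y+(r-1)⁻¹) ^ (α - ((i+2:ℕ):ℝ)) /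
      (r-1)^(m+i+3) with hK
  have hT : Tm α y (m+1) (i+2) r = ((m.choose (i+1) : ℝ) * ((m:ℝ)+1)) * (-K) := by
    simp only [Tm, Nat.add_sub_cancel, hidx1, hf, hfacm, hfac2, hK]
    push_cast
    field_simp
    ring
  have hA : Am α y m r (i+2) = (((m-1).choose (i+1) : ℝ) * ((m:ℝ)+(i:ℝ)+2)) * (-K) := by
    simp only [Am, hidx1, hf, hfac2, hK]
    push_cast
    field_simp
    ring
  have hB : Bm α y m r (i+1) = (((i:ℝ)+2) * ((m-1).choose i : ℝ)) * (-K) := by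
    simp only [Bm, hidx2, hexp, hK]
    push_cast
    field_simp
    ring
  rw [hT, hA, hB, ← add_mul, ← hcR]


/-- The closed-form derivative from the proof of the paper's Theorem 4.12:
`dᵐ/drᵐ (y + 1/(r-1))^α` for `m ≥ 1`, where `^` denotes the real power `Real.rpow`. -/
theorem iteratedDeriv_rpow_inv (α y : ℝ) (m : ℕ) (hm : 1 ≤ m) (r : ℝ)
    (hr : r ≠ 1) (hyr : 0 < y + (r - 1)⁻¹) :
    iteratedDeriv m (fun s => (y + (s - 1)⁻¹) ^ α) r =
      ∑ k ∈ Finset.Icc 1 m,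
        ((m - 1).choose (k - 1) : ℝ) * ((m.factorial : ℝ) / (k.factorial : ℝ)) *
          ((-1 : ℝ) ^ m / (r - 1) ^ (m + k)) * fallingFactorial α k *
          (y + (r - 1)⁻¹) ^ (α - k) := by
  have main : ∀ n : ℕ, 1 ≤ n → ∀ s : ℝ, s ≠ 1 → 0 < y + (s - 1)⁻¹ →
      iteratedDeriv n (fun s => (y + (s - 1)⁻¹) ^ α) s = ∑ k ∈ Finset.Icc 1 n, Tm α y n k s := by
    intro n hn
    induction n, hn using Nat.le_induction with
    | base =>
      intro s hs hys
      have hne : s - 1 ≠ 0 := sub_ne_zero.mpr hs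
      have hd : HasDerivAt (fun t => (y + (t - 1)⁻¹) ^ α)
          ((-((s-1)^2)⁻¹) * α * (y + (s-1)⁻¹) ^ (α - 1)) s :=
        (hasDerivAt_inner y s hs).rpow_const (Or.inl hys.ne')
      rw [iteratedDeriv_one, hd.deriv, Finset.Icc_self, Finset.sum_singleton]
      simp only [Tm, Nat.sub_self, Nat.choose_zero_right, Nat.factorial_one,
        fallingFactorial, Finset.prod_range_one]
      push_cast
      field_simp
      ring
    | succ n hn IH =>
      intro s hs hys
      have hne : s - 1 ≠ 0 := sub_ne_zero.mpr hs
      -- eventual equality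
      have hev : iteratedDeriv n (fun t => (y + (t - 1)⁻¹) ^ α)
          =ᶠ[nhds s] (fun t => ∑ k ∈ Finset.Icc 1 n, Tm α y n k t) := by
        have h1 : ∀ᶠ t in nhds s, t ≠ 1 := eventually_ne_nhds hs
        have hc : ContinuousAt (fun t : ℝ => y + (t - 1)⁻¹) s :=
          continuousAt_const.add ((continuousAt_id.sub continuousAt_const).inv₀ hne)
        have h2 : ∀ᶠ t in nhds s, 0 < y + (t - 1)⁻¹ := by
          have := hc (Ioi_mem_nhds hys)
          simpa [Set.preimage, Filter.Eventually] using this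
        filter_upwards [h1, h2] with t ht1 ht2
        exact IH t ht1 ht2
      -- derivative of the closed form
      have hderiv : HasDerivAt (fun t => ∑ k ∈ Finset.Icc 1 n, Tm α y n k t)
          (∑ k ∈ Finset.Icc 1 n, (Am α y n s k + Bm α y n s k)) s := by
        apply HasDerivAt.fun_sum
        intro k hk
        have h := (hasDerivAt_term y (α - k) (n + k) s hs hys).const_mul
          (((n - 1).choose (k - 1) : ℝ) * ((n.factorial : ℝ) / (k.factorial : ℝ)) *
            (-1 : ℝ)^n * fallingFactorial α k)
        have hfun : Tm α y n k
            = fun t => (((n - 1).choose (k - 1) : ℝ) * ((n.factorial : ℝ) / (k.factorial : ℝ)) *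
              (-1 : ℝ)^n * fallingFactorial α k) * (((t-1)^(n+k))⁻¹ * (y + (t-1)⁻¹) ^ (α - k)) := by
          funext t
          simp only [Tm]
          ring
        rw [hfun]
        refine h.congr_deriv ?_
        simp only [Am, Bm]
        push_cast
        ring
      rw [iteratedDeriv_succ, hev.deriv_eq, hderiv.deriv]
      -- algebra: recombine the sums
      rw [sum_Icc_one, sum_Icc_one]
      rw [Finset.sum_add_distrib, Finset.sum_range_succ']
      have e1 : ∑ i ∈ Finset.range n, Tm α y (n+1) (i+1+1) s
          = ∑ i ∈ Finset.range n, (Am α y n s (i+2) + Bm α y n s (i+1)) :=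
        Finset.sum_congr rfl fun i _ => P2 α y n s hn hne i
      rw [e1, P1 α y n s, Finset.sum_add_distrib]
      have e2 : ∑ i ∈ Finset.range n, Am α y n s (i+1)
          = ∑ i ∈ Finset.range n, Am α y n s (i+1+1) + Am α y n s (0+1) := by
        rw [← Finset.sum_range_succ' (fun j => Am α y n s (j+1)) n,
          Finset.sum_range_succ, P3 α y n s hn, add_zero]
      rw [e2]
      ring
  rw [main m hm r hr hyr]
  simp only [Tm]
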